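/- Let ρ satisfy (A3), let c > 0, let 0 < ε < b < 1, and let H ∈ V_ε under the Gaussian model. Call a triple (α', θ', σ') feasible if σ' > 0 and ∫ ρ((y − α' − x'θ')/σ') dH(y,x) ≤ b. Suppose (α, θ, σ) is feasible and minimizes L(α', θ', σ') = c ∫ ρ((y − α' − x'θ')/σ') dH(y,x) + log σ' among all feasible triples. Then ‖θ‖ ≤ (exp(2cε + 2D_c(ε)) − 1)^{1/2}. -/

import Mathlib

open MeasureTheory ProbabilityTheory Filter Set
open scoped NNReal ENNReal

lemma conv_pdf (v₁ v₂ : ℝ≥0) (h1 : v₁ ≠ 0) (h2 : v₂ ≠ 0) (y : ℝ) :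
    ∫ x : ℝ, gaussianPDFReal 0 v₁ x * gaussianPDFReal 0 v₂ (y - x) =
      gaussianPDFReal 0 (v₁ + v₂) y := by
  set a : ℝ := (v₁ : ℝ) with ha_def
  set b : ℝ := (v₂ : ℝ) with hb_def
  have ha : (0:ℝ) < a := by
    simp only [ha_def]
    exact_mod_cast (pos_iff_ne_zero.mpr h1)
  have hb : (0:ℝ) < b := by
    simp only [hb_def]
    exact_mod_cast (pos_iff_ne_zero.mpr h2)
  have hV : (0:ℝ) < a + b := by linarith
  have hπ := Real.pi_pos
  set k : ℝ := (a+b)/(2*a*b) with hk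
  have hkpos : 0 < k := by positivity
  set m : ℝ := a*y/(a+b) with hm
  set K : ℝ := (Real.sqrt (2*Real.pi*a))⁻¹ * (Real.sqrt (2*Real.pi*b))⁻¹ *
      Real.exp (-y^2/(2*(a+b))) with hK
  have hpt : ∀ x : ℝ, gaussianPDFReal 0 v₁ x * gaussianPDFReal 0 v₂ (y - x)
      = K * Real.exp (-k * (x - m)^2) := by
    intro x
    rw [gaussianPDFReal_def, gaussianPDFReal_def]
    simp only [sub_zero]
    rw [mul_mul_mul_comm, ← Real.exp_add, hK, ← ha_def, ← hb_def,
      mul_assoc _ (Real.exp (-y^2/(2*(a+b)))), ← Real.exp_add]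
    congr 1
    congr 1
    rw [hk, hm]
    field_simp
    ring
  rw [MeasureTheory.integral_congr_ae (Filter.Eventually.of_forall hpt)]
  rw [integral_const_mul]
  have hint : ∫ x : ℝ, Real.exp (-k * (x - m)^2) = Real.sqrt (Real.pi / k) := by
    rw [← integral_gaussian k]
    exact MeasureTheory.integral_sub_right_eq_self (fun t => Real.exp (-k * t^2)) m
  have hc : (Real.sqrt (2*Real.pi*a))⁻¹ * (Real.sqrt (2*Real.pi*b))⁻¹ *
      Real.sqrt (Real.pi / k) = (Real.sqrt (2*Real.pi*(a+b)))⁻¹ := by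
    rw [← Real.sqrt_inv (2*Real.pi*a), ← Real.sqrt_inv (2*Real.pi*b),
      ← Real.sqrt_mul (by positivity), ← Real.sqrt_mul (by positivity),
      ← Real.sqrt_inv (2*Real.pi*(a+b))]
    congr 1
    rw [hk]
    field_simp
  rw [hint, gaussianPDFReal_def]
  simp only [sub_zero]
  push_cast
  rw [← ha_def, ← hb_def, hK]
  rw [show (Real.sqrt (2*Real.pi*a))⁻¹ * (Real.sqrt (2*Real.pi*b))⁻¹ *
      Real.exp (-y^2/(2*(a+b))) * Real.sqrt (Real.pi / k) =
      ((Real.sqrt (2*Real.pi*a))⁻¹ * (Real.sqrt (2*Real.pi*b))⁻¹ *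
      Real.sqrt (Real.pi / k)) * Real.exp (-y^2/(2*(a+b))) from by ring, hc]

lemma gaussianPDFReal_le (v : ℝ≥0) (x : ℝ) :
    gaussianPDFReal 0 v x ≤ (Real.sqrt (2*Real.pi*v))⁻¹ := by
  rw [gaussianPDFReal_def]
  simp only [sub_zero]
  nth_rewrite 2 [← mul_one (Real.sqrt (2*Real.pi*(v:ℝ)))⁻¹]
  apply mul_le_mul_of_nonneg_left _ (by positivity)
  rw [Real.exp_le_one_iff]
  have h1 : -x^2 ≤ 0 := neg_nonpos.2 (sq_nonneg x)
  have h2 : (0:ℝ) ≤ 2*(v:ℝ) := by positivity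
  exact div_nonpos_of_nonpos_of_nonneg h1 h2

lemma integrable_pdf_mul (v₁ v₂ : ℝ≥0) (u : ℝ) :
    Integrable (fun x => gaussianPDFReal 0 v₁ x * gaussianPDFReal 0 v₂ (u - x)) := by
  apply Integrable.mono' (((integrable_gaussianPDFReal 0 v₁)).const_mul
    (Real.sqrt (2*Real.pi*(v₂:ℝ)))⁻¹)
  · exact ((measurable_gaussianPDFReal 0 v₁).mul
      ((measurable_gaussianPDFReal 0 v₂).comp (measurable_const.sub measurable_id))).aestronglyMeasurable
  · refine Filter.Eventually.of_forall fun x => ?_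
    rw [Real.norm_eq_abs, abs_of_nonneg (mul_nonneg (gaussianPDFReal_nonneg 0 v₁ x)
      (gaussianPDFReal_nonneg 0 v₂ (u - x)))]
    rw [mul_comm ((Real.sqrt (2*Real.pi*(v₂:ℝ)))⁻¹)]
    exact mul_le_mul_of_nonneg_left (gaussianPDFReal_le v₂ (u - x))
      (gaussianPDFReal_nonneg 0 v₁ x)

lemma conv_gaussian (v₁ v₂ : ℝ≥0) :
    ((gaussianReal 0 v₁).prod (gaussianReal 0 v₂)).map (fun q : ℝ × ℝ => q.1 + q.2) =
      gaussianReal 0 (v₁ + v₂) := by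
  by_cases h1 : v₁ = 0
  · subst h1
    rw [gaussianReal_zero_var, Measure.dirac_prod, Measure.map_map
      (show Measurable fun q : ℝ × ℝ => q.1 + q.2 from measurable_fst.add measurable_snd) measurable_prodMk_left]
    simp only [Function.comp_def, zero_add]
    simp [Measure.map_id]
  by_cases h2 : v₂ = 0
  · subst h2
    rw [gaussianReal_zero_var, Measure.prod_dirac, Measure.map_map
      (show Measurable fun q : ℝ × ℝ => q.1 + q.2 from measurable_fst.add measurable_snd) measurable_prodMk_right]
    simp only [Function.comp_def, add_zero]
    simp [Measure.map_id]
  have hV : v₁ + v₂ ≠ 0 := by simp [h1]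
  ext s hs
  rw [Measure.map_apply (show Measurable fun q : ℝ × ℝ => q.1 + q.2 from measurable_fst.add measurable_snd) hs,
    Measure.prod_apply (hs.preimage (show Measurable fun q : ℝ × ℝ => q.1 + q.2 from measurable_fst.add measurable_snd))]
  have hset : ∀ x : ℝ, (Prod.mk x ⁻¹' ((fun q : ℝ × ℝ => q.1 + q.2) ⁻¹' s))
      = {y : ℝ | x + y ∈ s} := fun x => rfl
  simp_rw [hset]
  rw [gaussianReal_of_var_ne_zero 0 h1, gaussianReal_of_var_ne_zero 0 hV]
  have hmeas_inner : Measurable fun x : ℝ => (gaussianReal 0 v₂) {y : ℝ | x + y ∈ s} := by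
    have := measurable_measure_prodMk_left
      (hs.preimage (show Measurable fun q : ℝ × ℝ => q.1 + q.2 from measurable_fst.add measurable_snd) :
        MeasurableSet ((fun q : ℝ × ℝ => q.1 + q.2) ⁻¹' s)) (ν := gaussianReal 0 v₂)
    simpa [hset] using this
  rw [lintegral_withDensity_eq_lintegral_mul _ (measurable_gaussianPDF 0 v₁) hmeas_inner]
  have hinner : ∀ x : ℝ, (gaussianReal 0 v₂) {y : ℝ | x + y ∈ s}
      = ∫⁻ u, s.indicator (fun _ => (1:ℝ≥0∞)) u * gaussianPDF 0 v₂ (u - x) := by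
    intro x
    have hsx : MeasurableSet {y : ℝ | x + y ∈ s} :=
      hs.preimage (measurable_const.add measurable_id)
    rw [gaussianReal_of_var_ne_zero 0 h2, withDensity_apply _ hsx, ← lintegral_indicator hsx _]
    have heq : ∀ y : ℝ, ({y : ℝ | x + y ∈ s}).indicator (gaussianPDF 0 v₂) y
        = (fun u => s.indicator (fun _ => (1:ℝ≥0∞)) u * gaussianPDF 0 v₂ (u - x)) (y + x) := by
      intro y
      simp only [indicator, mem_setOf_eq, add_sub_cancel_right]
      by_cases hy : x + y ∈ s
      · rw [if_pos (show y ∈ {y : ℝ | x + y ∈ s} from hy), if_pos (by rwa [add_comm] at hy), one_mul]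
      · rw [if_neg (show y ∉ {y : ℝ | x + y ∈ s} from hy), if_neg (by rwa [add_comm] at hy), zero_mul]
    rw [lintegral_congr heq]
    exact lintegral_add_right_eq_self
      (fun u => s.indicator (fun _ => (1:ℝ≥0∞)) u * gaussianPDF 0 v₂ (u - x)) x
  simp_rw [hinner, Pi.mul_apply]
  have hmeas2 : Measurable fun q : ℝ × ℝ =>
      gaussianPDF 0 v₁ q.1 * (s.indicator (fun _ => (1:ℝ≥0∞)) q.2 * gaussianPDF 0 v₂ (q.2 - q.1)) := by
    apply ((measurable_gaussianPDF 0 v₁).comp measurable_fst).mul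
    apply Measurable.mul
    · exact ((measurable_indicator_const_iff 1).mpr hs).comp measurable_snd
    · exact (measurable_gaussianPDF 0 v₂).comp (measurable_snd.sub measurable_fst)
  rw [show (fun x => gaussianPDF 0 v₁ x *
      ∫⁻ u, s.indicator (fun _ => (1:ℝ≥0∞)) u * gaussianPDF 0 v₂ (u - x)) = fun x =>
      ∫⁻ u, gaussianPDF 0 v₁ x * (s.indicator (fun _ => (1:ℝ≥0∞)) u * gaussianPDF 0 v₂ (u - x))
      from funext fun x => (lintegral_const_mul _ (by
        apply Measurable.mul
        · exact (measurable_indicator_const_iff 1).mpr hs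
        · exact (measurable_gaussianPDF 0 v₂).comp (measurable_id.sub measurable_const))).symm]
  rw [lintegral_lintegral_swap hmeas2.aemeasurable]
  have hkey : ∀ u : ℝ, (∫⁻ x, gaussianPDF 0 v₁ x *
      (s.indicator (fun _ => (1:ℝ≥0∞)) u * gaussianPDF 0 v₂ (u - x)))
      = s.indicator (fun _ => (1:ℝ≥0∞)) u * gaussianPDF 0 (v₁ + v₂) u := by
    intro u
    simp_rw [show ∀ x : ℝ, gaussianPDF 0 v₁ x *
        (s.indicator (fun _ => (1:ℝ≥0∞)) u * gaussianPDF 0 v₂ (u - x))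
        = s.indicator (fun _ => (1:ℝ≥0∞)) u * (gaussianPDF 0 v₁ x * gaussianPDF 0 v₂ (u - x))
        from fun x => by ring]
    have hmm : Measurable fun x : ℝ => gaussianPDF 0 v₁ x * gaussianPDF 0 v₂ (u - x) := by
      exact (measurable_gaussianPDF 0 v₁).mul
        ((measurable_gaussianPDF 0 v₂).comp (measurable_const.sub measurable_id))
    rw [lintegral_const_mul _ hmm]
    congr 1
    unfold gaussianPDF
    simp_rw [← ENNReal.ofReal_mul (gaussianPDFReal_nonneg 0 v₁ _)]
    rw [← ofReal_integral_eq_lintegral_ofReal (integrable_pdf_mul v₁ v₂ u)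
      (Filter.Eventually.of_forall fun x => mul_nonneg (gaussianPDFReal_nonneg 0 v₁ x)
        (gaussianPDFReal_nonneg 0 v₂ _))]
    rw [conv_pdf v₁ v₂ h1 h2 u]
  simp_rw [hkey]
  rw [withDensity_apply _ hs, ← lintegral_indicator hs _]
  apply lintegral_congr
  intro u
  simp only [indicator]
  by_cases hu : u ∈ s
  · simp [hu]
  · simp [hu]

lemma sum_law : ∀ (n : ℕ) (θ : Fin n → ℝ),
    (Measure.pi fun _ : Fin n => gaussianReal 0 1).map (fun x => ∑ i, θ i * x i) =
      gaussianReal 0 (∑ i, (θ i ^ 2).toNNReal) := by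
  intro n
  induction n with
  | zero =>
    intro θ
    have : (fun x : Fin 0 → ℝ => ∑ i, θ i * x i) = fun _ => (0:ℝ) := by
      funext x; simp
    rw [this, Measure.map_const]
    simp [gaussianReal_zero_var]
  | succ n ih =>
    intro θ
    have hsum_meas : ∀ (k : ℕ) (τ : Fin k → ℝ),
        Measurable fun x : Fin k → ℝ => ∑ i, τ i * x i := fun k τ =>
      Finset.univ.measurable_sum fun i _ => (measurable_pi_apply (X := fun _ => ℝ) i).const_mul (τ i)
    set e := MeasurableEquiv.piFinSuccAbove (fun _ : Fin (n+1) => ℝ) 0 with he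
    have hmp := measurePreserving_piFinSuccAbove (fun _ : Fin (n+1) => gaussianReal 0 1) 0
    have hpi : Measure.pi (fun _ : Fin (n+1) => gaussianReal 0 1)
        = ((gaussianReal 0 1).prod (Measure.pi fun _ : Fin n => gaussianReal 0 1)).map e.symm := by
      rw [← hmp.map_eq, Measure.map_map e.symm.measurable e.measurable]
      simp [Measure.map_id]
    rw [hpi, Measure.map_map (hsum_meas _ θ) e.symm.measurable]
    have hcomp : (fun x : Fin (n+1) → ℝ => ∑ i, θ i * x i) ∘ e.symm
        = (fun r : ℝ × ℝ => r.1 + r.2) ∘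
          (Prod.map (fun y : ℝ => θ 0 * y) (fun x : Fin n → ℝ => ∑ j, θ j.succ * x j)) := by
      funext q
      simp [he, MeasurableEquiv.piFinSuccAbove_symm_apply, Fin.insertNthEquiv,
        Fin.sum_univ_succ, Fin.succAbove_zero]
    have hm1 : Measurable fun y : ℝ => θ 0 * y := measurable_id.const_mul (θ 0)
    rw [hcomp, ← Measure.map_map (show Measurable fun q : ℝ × ℝ => q.1 + q.2 from measurable_fst.add measurable_snd)
      (hm1.prodMap (hsum_meas n fun j => θ j.succ)),
      ← Measure.map_prod_map _ _ hm1 (hsum_meas n fun j => θ j.succ)]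
    have hmul : (gaussianReal 0 1).map (fun y : ℝ => θ 0 * y)
        = gaussianReal 0 ((θ 0 ^ 2).toNNReal) := by
      have := gaussianReal_map_const_mul (μ := 0) (v := 1) (θ 0)
      simp only [mul_zero] at this
      rw [show (fun y : ℝ => θ 0 * y) = (θ 0 * ·) from rfl, this]
      congr 1
      ext
      simp [Real.coe_toNNReal', sq_nonneg, le_of_lt]
    rw [hmul, ih, conv_gaussian]
    congr 1
    rw [Fin.sum_univ_succ]

lemma gpdf_even (v : ℝ≥0) (x : ℝ) : gaussianPDFReal 0 v (-x) = gaussianPDFReal 0 v x := by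
  simp [gaussianPDFReal_def, neg_sq]

lemma interval_real (v : ℝ≥0) (hv : v ≠ 0) (r : ℝ) (hr : 0 ≤ r) (m : ℝ) (hm : 0 ≤ m) :
    ∫ x in r..(m+r), gaussianPDFReal 0 v x ≤ ∫ x in (-r)..(m-r), gaussianPDFReal 0 v x := by
  have hvpos : (0:ℝ) < v := by exact_mod_cast pos_iff_ne_zero.mpr hv
  have h1 : ∫ x in r..(m+r), gaussianPDFReal 0 v x
      = ∫ u in (0:ℝ)..m, gaussianPDFReal 0 v (u + r) := by
    rw [intervalIntegral.integral_comp_add_right (gaussianPDFReal 0 v) r, zero_add]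
  have h2 : ∫ x in (-r)..(m-r), gaussianPDFReal 0 v x
      = ∫ u in (0:ℝ)..m, gaussianPDFReal 0 v (u - r) := by
    simp_rw [sub_eq_add_neg]
    rw [intervalIntegral.integral_comp_add_right (gaussianPDFReal 0 v) (-r), zero_add]
  rw [h1, h2]
  apply intervalIntegral.integral_mono_on hm
  · exact ((integrable_gaussianPDFReal 0 v).comp_add_right r).intervalIntegrable
  · exact ((integrable_gaussianPDFReal 0 v).comp_sub_right r).intervalIntegrable
  · intro u hu
    simp only [gaussianPDFReal_def, sub_zero]
    apply mul_le_mul_of_nonneg_left _ (by positivity)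
    apply Real.exp_le_exp.mpr
    rw [div_le_div_iff_of_pos_right (by positivity)]
    have := hu.1
    nlinarith [mul_nonneg hu.1 hr]

lemma interval_lemma (v : ℝ≥0) (hv : v ≠ 0) (r : ℝ) (hr : 0 ≤ r) (m : ℝ) :
    (gaussianReal 0 v) (Icc (m - r) (m + r)) ≤ (gaussianReal 0 v) (Icc (-r) r) := by
  have hvpos : (0:ℝ) < v := by exact_mod_cast pos_iff_ne_zero.mpr hv
  rw [gaussianReal_apply_eq_integral 0 hv, gaussianReal_apply_eq_integral 0 hv]
  apply ENNReal.ofReal_le_ofReal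
  have hIcc : ∀ a b : ℝ, a ≤ b → (∫ x in Icc a b, gaussianPDFReal 0 v x)
      = ∫ x in a..b, gaussianPDFReal 0 v x := by
    intro a b hab
    rw [MeasureTheory.integral_Icc_eq_integral_Ioc, intervalIntegral.integral_of_le hab]
  rw [hIcc _ _ (by linarith [abs_nonneg m] : m - r ≤ m + r), hIcc _ _ (by linarith : -r ≤ r)]
  -- reduce to |m|
  have key : ∀ m' : ℝ, 0 ≤ m' → (∫ x in (m'-r)..(m'+r), gaussianPDFReal 0 v x)
      ≤ ∫ x in (-r)..r, gaussianPDFReal 0 v x := by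
    intro m' hm'
    have hInt : ∀ a b : ℝ, IntervalIntegrable (gaussianPDFReal 0 v) volume a b :=
      fun a b => (integrable_gaussianPDFReal 0 v).intervalIntegrable
    have e1 : (∫ x in (m'-r)..(m'+r), gaussianPDFReal 0 v x)
        = (∫ x in (m'-r)..r, gaussianPDFReal 0 v x)
          + ∫ x in r..(m'+r), gaussianPDFReal 0 v x :=
      (intervalIntegral.integral_add_adjacent_intervals (hInt _ _) (hInt _ _)).symm
    have e2 : (∫ x in (-r)..r, gaussianPDFReal 0 v x)
        = (∫ x in (-r)..(m'-r), gaussianPDFReal 0 v x)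
          + ∫ x in (m'-r)..r, gaussianPDFReal 0 v x :=
      (intervalIntegral.integral_add_adjacent_intervals (hInt _ _) (hInt _ _)).symm
    have := interval_real v hv r hr m' hm'
    linarith
  rcases le_or_gt 0 m with hm | hm
  · exact key m hm
  · have hflip : (∫ x in (m-r)..(m+r), gaussianPDFReal 0 v x)
        = ∫ x in ((-m)-r)..((-m)+r), gaussianPDFReal 0 v x := by
      have : (∫ x in (m-r)..(m+r), gaussianPDFReal 0 v x)
          = ∫ x in (m-r)..(m+r), gaussianPDFReal 0 v (-x) := by
        apply intervalIntegral.integral_congr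
        intro x _
        simp [gpdf_even]
      rw [this, intervalIntegral.integral_comp_neg (gaussianPDFReal 0 v)]
      congr 1 <;> ring
    rw [hflip]
    exact key (-m) (by linarith)

lemma anderson (f : ℝ → ℝ) (hmeas : Measurable f) (hsymm : ∀ u, f (-u) = f u)
    (hmono : MonotoneOn f (Ici 0)) (h0 : ∀ u, 0 ≤ f u) (h1 : ∀ u, f u ≤ 1)
    (v : ℝ≥0) (hv : v ≠ 0) (m : ℝ) :
    ∫ u, f u ∂(gaussianReal 0 v) ≤ ∫ u, f (u - m) ∂(gaussianReal 0 v) := by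
  set μ := gaussianReal 0 v with hμ
  have hfabs : ∀ u, f u = f |u| := by
    intro u
    rcases abs_cases u with ⟨h, _⟩ | ⟨h, _⟩
    · rw [h]
    · rw [h, hsymm]
  have hmeas' : Measurable fun u => f (u - m) := hmeas.comp (measurable_id.sub measurable_const)
  -- key measure inequality
  have hkey : ∀ t : ℝ, μ {u | t < f u} ≤ μ {u | t < f (u - m)} := by
    intro t
    by_cases hne : {w : ℝ | 0 ≤ w ∧ t < f w}.Nonempty
    · set W := {w : ℝ | 0 ≤ w ∧ t < f w} with hW
      have hbdd : BddBelow W := ⟨0, fun w hw => hw.1⟩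
      set r := sInf W with hrdef
      have hr0 : 0 ≤ r := le_csInf hne fun w hw => hw.1
      have hsub : {u : ℝ | r < |u - m|} ⊆ {u | t < f (u - m)} := by
        intro u hu
        obtain ⟨w, hwW, hw⟩ := exists_lt_of_csInf_lt hne hu
        have : f w ≤ f (u - m) := by
          rw [hfabs (u - m)]
          exact hmono (mem_Ici.mpr hwW.1) (mem_Ici.mpr (abs_nonneg _)) hw.le
        exact lt_of_lt_of_le hwW.2 this
      have hsup : {u : ℝ | t < f u} ⊆ {u | r ≤ |u|} := by
        intro u hu
        exact csInf_le hbdd ⟨abs_nonneg u, by rw [← hfabs]; exact hu⟩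
      have hatom : μ ({-r, r} : Set ℝ) = 0 := by
        have habs := gaussianReal_absolutelyContinuous 0 hv
        apply habs
        exact Set.Countable.measure_zero ((Set.countable_singleton _).insert _) _
      have habs_le : {u : ℝ | r ≤ |u|} ⊆ {u : ℝ | r < |u|} ∪ ({-r, r} : Set ℝ) := by
        intro u hu
        have hu' : r ≤ |u| := hu
        rcases eq_or_lt_of_le hu' with h | h
        · right
          rcases abs_cases u with ⟨h', _⟩ | ⟨h', _⟩
          · right; rw [← h', ← h]; exact rfl
          · left; rw [show u = -|u| from by rw [h']; ring, ← h]
        · left; exact h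
      have hcompl1 : {u : ℝ | r < |u|} = (Icc (-r) r)ᶜ := by
        ext u
        rw [mem_setOf_eq, mem_compl_iff, mem_Icc, ← abs_le, not_le]
      have hcompl2 : (Icc (m - r) (m + r))ᶜ ⊆ {u : ℝ | r < |u - m|} := by
        intro u hu
        rw [mem_compl_iff, mem_Icc, not_and_or, not_le, not_le] at hu
        rw [mem_setOf_eq, lt_abs]
        rcases hu with h | h
        · exact Or.inr (by linarith)
        · exact Or.inl (by linarith)
      calc μ {u | t < f u} ≤ μ {u : ℝ | r ≤ |u|} := measure_mono hsup
        _ ≤ μ {u : ℝ | r < |u|} + μ ({-r, r} : Set ℝ) :=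
            le_trans (measure_mono habs_le) (measure_union_le _ _)
        _ = μ {u : ℝ | r < |u|} := by rw [hatom, add_zero]
        _ = 1 - μ (Icc (-r) r) := by rw [hcompl1, prob_compl_eq_one_sub measurableSet_Icc]
        _ ≤ 1 - μ (Icc (m - r) (m + r)) :=
            tsub_le_tsub_left (interval_lemma v hv r hr0 m) 1
        _ = μ (Icc (m - r) (m + r))ᶜ := (prob_compl_eq_one_sub measurableSet_Icc).symm
        _ ≤ μ {u : ℝ | r < |u - m|} := measure_mono hcompl2
        _ ≤ μ {u | t < f (u - m)} := measure_mono hsub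
    · have : {u : ℝ | t < f u} = ∅ := by
        rw [eq_empty_iff_forall_notMem]
        intro u hu
        exact hne ⟨|u|, abs_nonneg u, by rw [← hfabs]; exact hu⟩
      rw [this]
      simp
  -- convert integrals
  have hnn : ∀ᵐ u ∂μ, 0 ≤ f u := Filter.Eventually.of_forall h0
  have hnn' : ∀ᵐ u ∂μ, 0 ≤ f (u - m) := Filter.Eventually.of_forall fun u => h0 _
  rw [integral_eq_lintegral_of_nonneg_ae hnn hmeas.aestronglyMeasurable,
    integral_eq_lintegral_of_nonneg_ae hnn' hmeas'.aestronglyMeasurable]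
  have hfin : ∀ (g : ℝ → ℝ), (∀ u, g u ≤ 1) → (∫⁻ u, ENNReal.ofReal (g u) ∂μ) ≤ 1 := by
    intro g hg
    calc (∫⁻ u, ENNReal.ofReal (g u) ∂μ) ≤ ∫⁻ _, 1 ∂μ :=
        lintegral_mono fun u => ENNReal.ofReal_le_one.mpr (hg u)
      _ = 1 := by simp
  apply ENNReal.toReal_mono (by
    exact ne_top_of_le_ne_top (by simp) (hfin _ fun u => h1 _))
  rw [lintegral_eq_lintegral_meas_lt μ hnn hmeas.aemeasurable,
    lintegral_eq_lintegral_meas_lt μ hnn' hmeas'.aemeasurable]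
  exact lintegral_mono fun t => hkey t

section rho
variable {ρ : ℝ → ℝ}

lemma rho_abs (hρ_even : ∀ u, ρ (-u) = ρ u) : ∀ u, ρ u = ρ |u| := by
  intro u
  rcases abs_cases u with ⟨h, _⟩ | ⟨h, _⟩
  · rw [h]
  · rw [h, hρ_even]

lemma rho_abs_mono (hρ_even : ∀ u, ρ (-u) = ρ u) (hρ_mono : MonotoneOn ρ (Set.Ici 0))
    {u w : ℝ} (h : |u| ≤ |w|) : ρ u ≤ ρ w := by
  rw [rho_abs hρ_even u, rho_abs hρ_even w]
  exact hρ_mono (mem_Ici.mpr (abs_nonneg u)) (mem_Ici.mpr (abs_nonneg w)) h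

lemma integrable_rho (hρ_meas : Measurable ρ) (hρ_bdd : ∀ u, 0 ≤ ρ u ∧ ρ u ≤ 1)
    {E : Type*} [MeasurableSpace E] (μ : Measure E) [IsFiniteMeasure μ]
    {φ : E → ℝ} (hφ : Measurable φ) : Integrable (fun x => ρ (φ x)) μ := by
  refine Integrable.mono' (integrable_const (1:ℝ)) ?_ ?_
  · exact (hρ_meas.comp hφ).aestronglyMeasurable
  refine Filter.Eventually.of_forall fun x => ?_
  rw [Real.norm_eq_abs, abs_le]
  exact ⟨by linarith [(hρ_bdd (φ x)).1], (hρ_bdd (φ x)).2⟩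

lemma rho_int_le_one (hρ_bdd : ∀ u, 0 ≤ ρ u ∧ ρ u ≤ 1) (hρ_meas : Measurable ρ)
    {E : Type*} [MeasurableSpace E] (μ : Measure E) [IsProbabilityMeasure μ]
    {φ : E → ℝ} (hφ : Measurable φ) : ∫ x, ρ (φ x) ∂μ ≤ 1 := by
  calc ∫ x, ρ (φ x) ∂μ ≤ ∫ _, (1:ℝ) ∂μ :=
      integral_mono (integrable_rho hρ_meas hρ_bdd μ hφ) (integrable_const 1)
        fun x => (hρ_bdd (φ x)).2
    _ = 1 := by simp

lemma rho_int_nonneg (hρ_bdd : ∀ u, 0 ≤ ρ u ∧ ρ u ≤ 1)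
    {E : Type*} [MeasurableSpace E] (μ : Measure E) (φ : E → ℝ) :
    0 ≤ ∫ x, ρ (φ x) ∂μ :=
  integral_nonneg fun x => (hρ_bdd (φ x)).1

-- scaling: integral against N(0,v) in terms of the standard normal
lemma rho_scale (hρ_meas : Measurable ρ) (v : ℝ≥0) (hv : v ≠ 0) (σ : ℝ) :
    ∫ u, ρ (u / σ) ∂(gaussianReal 0 v)
      = ∫ z, ρ (Real.sqrt v * z / σ) ∂(gaussianReal 0 1) := by
  have hvpos : (0:ℝ) < v := by exact_mod_cast pos_iff_ne_zero.mpr hv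
  have hmap : (gaussianReal 0 1).map (fun z : ℝ => Real.sqrt v * z) = gaussianReal 0 v := by
    have := gaussianReal_map_const_mul (μ := 0) (v := 1) (Real.sqrt v)
    simp only [mul_zero] at this
    rw [show (fun z : ℝ => Real.sqrt v * z) = (Real.sqrt (v:ℝ) * ·) from rfl, this]
    congr 1
    ext
    simp [Real.sq_sqrt (le_of_lt hvpos)]
  have hm : Measurable fun z : ℝ => Real.sqrt v * z := by
    exact measurable_id.const_mul _
  have hf : AEStronglyMeasurable (fun u : ℝ => ρ (u / σ))
      ((gaussianReal 0 1).map (fun z : ℝ => Real.sqrt v * z)) := by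
    exact (hρ_meas.comp (measurable_id.div_const σ)).aestronglyMeasurable
  rw [← hmap, integral_map hm.aemeasurable hf]

-- pointwise comparison
lemma rho_div_mono (hρ_even : ∀ u, ρ (-u) = ρ u) (hρ_mono : MonotoneOn ρ (Set.Ici 0))
    {s₁ s₂ : ℝ} (h1 : 0 < s₁) (h12 : s₁ ≤ s₂) (z : ℝ) : ρ (z / s₂) ≤ ρ (z / s₁) := by
  apply rho_abs_mono hρ_even hρ_mono
  rw [abs_div, abs_div, abs_of_pos h1, abs_of_pos (lt_of_lt_of_le h1 h12)]
  exact div_le_div_of_nonneg_left (abs_nonneg z) h1 h12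

lemma rho_gauss_antitone (hρ_meas : Measurable ρ) (hρ_even : ∀ u, ρ (-u) = ρ u)
    (hρ_mono : MonotoneOn ρ (Set.Ici 0)) (hρ_bdd : ∀ u, 0 ≤ ρ u ∧ ρ u ≤ 1)
    {s₁ s₂ : ℝ} (h1 : 0 < s₁) (h12 : s₁ ≤ s₂) :
    ∫ z, ρ (z / s₂) ∂(gaussianReal 0 1) ≤ ∫ z, ρ (z / s₁) ∂(gaussianReal 0 1) :=
  integral_mono (integrable_rho hρ_meas hρ_bdd _ (measurable_id.div_const s₂))
    (integrable_rho hρ_meas hρ_bdd _ (measurable_id.div_const s₁))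
    fun z => rho_div_mono hρ_even hρ_mono h1 h12 z

-- quasi measure preserving scaling on volume
lemma qmp_mul (a : ℝ) (ha : a ≠ 0) :
    Measure.QuasiMeasurePreserving (fun u : ℝ => a * u) volume volume := by
  refine ⟨measurable_id.const_mul a, ?_⟩
  rw [Real.map_volume_mul_left ha]
  refine Measure.AbsolutelyContinuous.mk fun s _ hs0 => ?_
  simp [hs0]

lemma ae_scale {P : ℝ → Prop} (h : ∀ᵐ u ∂(volume : Measure ℝ), P u) (a : ℝ) (ha : a ≠ 0) :
    ∀ᵐ u ∂(volume : Measure ℝ), P (a * u) := (qmp_mul a ha).ae h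

lemma strict_core (hρ_meas : Measurable ρ) (hρ_even : ∀ u, ρ (-u) = ρ u)
    (hρ_mono : MonotoneOn ρ (Set.Ici 0)) (hρ_bdd : ∀ u, 0 ≤ ρ u ∧ ρ u ≤ 1)
    (hρ_lim : Tendsto ρ atTop (nhds 1))
    {s₁ s₂ : ℝ} (h1 : 0 < s₁) (h2 : s₁ < s₂)
    (heq : ∫ z, ρ (z / s₁) ∂(gaussianReal 0 1) = ∫ z, ρ (z / s₂) ∂(gaussianReal 0 1)) :
    ∫ z, ρ (z / s₂) ∂(gaussianReal 0 1) = 1 := by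
  have hs2 : (0:ℝ) < s₂ := lt_trans h1 h2
  set Φ : Measure ℝ := gaussianReal 0 1 with hΦ
  have hd1 : Measurable fun z : ℝ => z / s₁ := by exact measurable_id.div_const s₁
  have hd2 : Measurable fun z : ℝ => z / s₂ := by exact measurable_id.div_const s₂
  have hint1 := integrable_rho hρ_meas hρ_bdd Φ hd1
  have hint2 := integrable_rho hρ_meas hρ_bdd Φ hd2
  have hzero : ∫ z, (ρ (z / s₁) - ρ (z / s₂)) ∂Φ = 0 := by
    rw [integral_sub hint1 hint2, heq, sub_self]
  have haeΦ : (fun z => ρ (z / s₁) - ρ (z / s₂)) =ᵐ[Φ] 0 :=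
    (integral_eq_zero_iff_of_nonneg
      (fun z => sub_nonneg.mpr (rho_div_mono hρ_even hρ_mono h1 h2.le z))
      (hint1.sub hint2)).mp hzero
  have haevol : ∀ᵐ z ∂(volume : Measure ℝ), ρ (z / s₁) = ρ (z / s₂) := by
    have := haeΦ.filter_mono (gaussianReal_absolutelyContinuous' 0 one_ne_zero).ae_le
    filter_upwards [this] with z hz
    have : ρ (z / s₁) - ρ (z / s₂) = 0 := hz
    linarith
  set lam : ℝ := s₂ / s₁ with hlam
  have hlam1 : 1 < lam := (one_lt_div h1).mpr h2
  have hlampos : 0 < lam := lt_trans one_pos hlam1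
  -- base: ae u, ρ (lam * u) = ρ u
  have hbase : ∀ᵐ u ∂(volume : Measure ℝ), ρ (lam * u) = ρ u := by
    filter_upwards [ae_scale haevol s₂ (ne_of_gt hs2)] with u hu
    have e1 : s₂ * u / s₂ = u := by field_simp
    have e2 : s₂ * u / s₁ = lam * u := by
      rw [hlam]
      first
      | (field_simp; ring)
      | field_simp
    rw [e1, e2] at hu
    exact hu
  -- iterate
  have hiter : ∀ n : ℕ, ∀ᵐ u ∂(volume : Measure ℝ), ρ (lam ^ (n+1) * u) = ρ (lam ^ n * u) := by
    intro n
    filter_upwards [ae_scale hbase (lam ^ n) (by positivity)] with u hu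
    have : lam * (lam ^ n * u) = lam ^ (n+1) * u := by ring
    rw [this] at hu
    exact hu
  have hall : ∀ᵐ u ∂(volume : Measure ℝ), ∀ n : ℕ, ρ (lam ^ n * u) = ρ u := by
    rw [← ae_all_iff] at hiter
    filter_upwards [hiter] with u hu
    intro n
    induction n with
    | zero => simp
    | succ k ih => rw [hu k, ih]
  -- positive u: ρ u = 1
  have hpos1 : ∀ᵐ u ∂(volume : Measure ℝ), 0 < u → ρ u = 1 := by
    filter_upwards [hall] with u hu hupos
    have htend : Tendsto (fun n : ℕ => lam ^ n * u) atTop atTop :=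
      (tendsto_pow_atTop_atTop_of_one_lt hlam1).atTop_mul_const hupos
    have h1' : Tendsto (fun n : ℕ => ρ (lam ^ n * u)) atTop (nhds 1) := hρ_lim.comp htend
    have h2' : Tendsto (fun n : ℕ => ρ (lam ^ n * u)) atTop (nhds (ρ u)) := by
      simp_rw [hu]
      exact tendsto_const_nhds
    exact tendsto_nhds_unique h2' h1'
  -- all u ≠ 0
  have hneg1 : ∀ᵐ u ∂(volume : Measure ℝ), 0 < -u → ρ (-u) = 1 := by
    have hneg := (qmp_mul (-1) (by norm_num)).ae hpos1
    filter_upwards [hneg] with u hu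
    simpa using hu
  have hae1 : ∀ᵐ u ∂(volume : Measure ℝ), u ≠ 0 → ρ u = 1 := by
    filter_upwards [hpos1, hneg1] with u hp hn hne
    rcases lt_trichotomy u 0 with h | h | h
    · rw [← hρ_even u]
      exact hn (by linarith)
    · exact absurd h hne
    · exact hp h
  have hfinal : ∀ᵐ z ∂Φ, ρ (z / s₂) = 1 := by
    have h0 : ∀ᵐ z ∂(volume : Measure ℝ), z ≠ 0 := by
      rw [ae_iff]
      simp only [ne_eq, not_not, setOf_eq_eq_singleton]
      exact measure_singleton 0
    have hv : ∀ᵐ z ∂(volume : Measure ℝ), ρ (z / s₂) = 1 := by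
      filter_upwards [ae_scale hae1 s₂⁻¹ (by positivity), h0] with z hz hz0
      have : s₂⁻¹ * z = z / s₂ := by field_simp
      rw [this] at hz
      exact hz (div_ne_zero hz0 (ne_of_gt hs2))
    exact hv.filter_mono (gaussianReal_absolutelyContinuous 0 one_ne_zero).ae_le
  rw [integral_congr_ae (g := fun _ => (1:ℝ)) hfinal]
  simp

end rho

lemma g_one_propagate {ρ : ℝ → ℝ} (hρ_meas : Measurable ρ) (hρ_bdd : ∀ u, 0 ≤ ρ u ∧ ρ u ≤ 1)
    {s₁ s₂ : ℝ} (h1 : 0 < s₁) (h2 : 0 < s₂)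
    (h : ∫ z, ρ (z / s₁) ∂(gaussianReal 0 1) = 1) :
    ∫ z, ρ (z / s₂) ∂(gaussianReal 0 1) = 1 := by
  set Φ : Measure ℝ := gaussianReal 0 1 with hΦ
  have hd1 : Measurable fun z : ℝ => z / s₁ := by exact measurable_id.div_const s₁
  have hint1 := integrable_rho hρ_meas hρ_bdd Φ hd1
  have hzero : ∫ z, ((1:ℝ) - ρ (z / s₁)) ∂Φ = 0 := by
    rw [integral_sub (integrable_const 1) hint1]
    simp only [integral_const, measure_univ, ENNReal.toReal_one, probReal_univ, one_smul]
    rw [h]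
    ring
  have hae : (fun z => (1:ℝ) - ρ (z / s₁)) =ᵐ[Φ] 0 :=
    (integral_eq_zero_iff_of_nonneg (fun z => sub_nonneg.mpr (hρ_bdd _).2)
      ((integrable_const 1).sub hint1)).mp hzero
  have haevol : ∀ᵐ z ∂(volume : Measure ℝ), ρ (z / s₁) = 1 := by
    have := hae.filter_mono (gaussianReal_absolutelyContinuous' 0 one_ne_zero).ae_le
    filter_upwards [this] with z hz
    have : (1:ℝ) - ρ (z / s₁) = 0 := hz
    linarith
  have hall : ∀ᵐ u ∂(volume : Measure ℝ), ρ u = 1 := by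
    filter_upwards [ae_scale haevol s₁ (ne_of_gt h1)] with u hu
    rwa [mul_div_cancel_left₀ _ (ne_of_gt h1)] at hu
  have h2' : ∀ᵐ z ∂Φ, ρ (z / s₂) = 1 := by
    have hv : ∀ᵐ z ∂(volume : Measure ℝ), ρ (z / s₂) = 1 := by
      filter_upwards [ae_scale hall s₂⁻¹ (by positivity)] with z hz
      rwa [show s₂⁻¹ * z = z / s₂ by field_simp] at hz
    exact hv.filter_mono (gaussianReal_absolutelyContinuous 0 one_ne_zero).ae_le
  rw [integral_congr_ae (g := fun _ => (1:ℝ)) h2']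
  simp

/-- Under the Gaussian model, the slope θ of any CM-estimate solution over
H ∈ V_ε satisfies ‖θ‖ ≤ (exp(2cε + 2D_c(ε)) − 1)^{1/2}. -/
theorem stmt7 (p : ℕ) (hp : 1 ≤ p) (ρ : ℝ → ℝ)
    (hρ_meas : Measurable ρ)
    (hρ_even : ∀ u, ρ (-u) = ρ u)
    (hρ_mono : MonotoneOn ρ (Set.Ici 0))
    (hρ_zero : ρ 0 = 0)
    (hρ_bdd : ∀ u, 0 ≤ ρ u ∧ ρ u ≤ 1)
    (hρ_lim : Tendsto ρ atTop (nhds 1))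
    (g : ℝ → ℝ)
    (hg : ∀ s, 0 < s → g s = ∫ z, ρ (z / s) ∂(gaussianReal 0 1))
    (c : ℝ) (hc : 0 < c)
    (b ε : ℝ) (hε : 0 < ε) (hεb : ε < b) (hb : b < 1)
    (σbε γbε : ℝ) (hσ_pos : 0 < σbε) (hγ_pos : 0 < γbε)
    (hσ : g σbε = (b - ε) / (1 - ε)) (hγ : g γbε = b / (1 - ε))
    (A : ℝ → ℝ) (hA : ∀ s, A s = c * (1 - ε) * g s + Real.log s)
    (D : ℝ) (hD : D = sInf (A '' Set.Ici σbε) - sInf (A '' Set.Ici γbε))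
    (Hstar : Measure (ℝ × (Fin p → ℝ))) (hHstar : IsProbabilityMeasure Hstar)
    (H : Measure (ℝ × (Fin p → ℝ)))
    (hH : H = ENNReal.ofReal (1 - ε) •
        ((gaussianReal 0 1).prod (Measure.pi fun _ : Fin p => gaussianReal 0 1)) +
        ENNReal.ofReal ε • Hstar)
    (α : ℝ) (θ : Fin p → ℝ) (σ : ℝ) (hσpos : 0 < σ)
    -- (α, θ, σ) is feasible:
    (hfeas : ∫ yx, ρ ((yx.1 - α - ∑ i, θ i * yx.2 i) / σ) ∂H ≤ b)
    -- and minimizes L among feasible triples: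
    (hmin : ∀ α' : ℝ, ∀ θ' : Fin p → ℝ, ∀ σ' : ℝ, 0 < σ' →
        (∫ yx, ρ ((yx.1 - α' - ∑ i, θ' i * yx.2 i) / σ') ∂H ≤ b) →
        c * ∫ yx, ρ ((yx.1 - α - ∑ i, θ i * yx.2 i) / σ) ∂H + Real.log σ ≤
        c * ∫ yx, ρ ((yx.1 - α' - ∑ i, θ' i * yx.2 i) / σ') ∂H + Real.log σ') :
    Real.sqrt (∑ i, θ i ^ 2) ≤ Real.sqrt (Real.exp (2 * c * ε + 2 * D) - 1) := by
  haveI := hHstar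
  have h1ε : (0:ℝ) < 1 - ε := by linarith
  set μ₀ : Measure (ℝ × (Fin p → ℝ)) :=
    (gaussianReal 0 1).prod (Measure.pi fun _ : Fin p => gaussianReal 0 1) with hμ₀
  haveI : IsProbabilityMeasure μ₀ := by rw [hμ₀]; infer_instance
  -- measurability of the residual maps
  have hfmeas : ∀ (a : ℝ) (t : Fin p → ℝ) (s : ℝ),
      Measurable fun yx : ℝ × (Fin p → ℝ) => (yx.1 - a - ∑ i, t i * yx.2 i) / s := by
    intro a t s
    apply Measurable.div_const
    apply Measurable.sub
    · exact measurable_fst.sub measurable_const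
    · exact Finset.univ.measurable_sum fun i _ =>
        ((measurable_pi_apply (X := fun _ => ℝ) i).comp measurable_snd).const_mul (t i)
  -- splitting integrals over H
  have hsplit : ∀ (a : ℝ) (t : Fin p → ℝ) (s : ℝ),
      ∫ yx, ρ ((yx.1 - a - ∑ i, t i * yx.2 i) / s) ∂H =
        (1 - ε) * (∫ yx, ρ ((yx.1 - a - ∑ i, t i * yx.2 i) / s) ∂μ₀) +
        ε * ∫ yx, ρ ((yx.1 - a - ∑ i, t i * yx.2 i) / s) ∂Hstar := by
    intro a t s
    rw [hH, integral_add_measure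
      ((integrable_rho hρ_meas hρ_bdd μ₀ (hfmeas a t s)).smul_measure ENNReal.ofReal_ne_top)
      ((integrable_rho hρ_meas hρ_bdd Hstar (hfmeas a t s)).smul_measure ENNReal.ofReal_ne_top),
      integral_smul_measure, integral_smul_measure,
      ENNReal.toReal_ofReal h1ε.le, ENNReal.toReal_ofReal hε.le, smul_eq_mul, smul_eq_mul]
  -- the variance
  set T : ℝ := Real.sqrt (1 + ∑ i, θ i ^ 2) with hT
  set V : ℝ≥0 := 1 + ∑ i, ((-θ i) ^ 2).toNNReal with hV
  have hVcoe : ((V : ℝ≥0) : ℝ) = 1 + ∑ i, θ i ^ 2 := by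
    rw [hV]
    push_cast
    congr 1
    apply Finset.sum_congr rfl
    intro i _
    rw [Real.coe_toNNReal _ (sq_nonneg _), neg_sq]
  have hsumnn : (0:ℝ) ≤ ∑ i, θ i ^ 2 := Finset.sum_nonneg fun i _ => sq_nonneg _
  have hVone : (1:ℝ) ≤ (V : ℝ) := by rw [hVcoe]; linarith
  have hVne : V ≠ 0 := by
    intro h
    rw [h] at hVone
    norm_num at hVone
  have hT1 : (1:ℝ) ≤ T := by
    have h := Real.sqrt_le_sqrt (by linarith : (1:ℝ) ≤ 1 + ∑ i, θ i ^ 2)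
    rwa [Real.sqrt_one] at h
  have hTpos : (0:ℝ) < T := lt_of_lt_of_le one_pos hT1
  have hsqrtV : Real.sqrt V = T := by rw [hT, hVcoe]
  -- the law of the residual under μ₀
  have hS : Measurable fun x : Fin p → ℝ => ∑ i, (-θ i) * x i :=
    Finset.univ.measurable_sum fun i _ => (measurable_pi_apply i).const_mul _
  have hlaw0 : μ₀.map (fun yx : ℝ × (Fin p → ℝ) => yx.1 + ∑ i, (-θ i) * yx.2 i)
      = gaussianReal 0 V := by
    have hcomp : (fun yx : ℝ × (Fin p → ℝ) => yx.1 + ∑ i, (-θ i) * yx.2 i)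
        = (fun q : ℝ × ℝ => q.1 + q.2) ∘
          (Prod.map (id : ℝ → ℝ) (fun x : Fin p → ℝ => ∑ i, (-θ i) * x i)) := rfl
    rw [hμ₀, hcomp, ← Measure.map_map (show Measurable fun q : ℝ × ℝ => q.1 + q.2 from measurable_fst.add measurable_snd)
      (measurable_id.prodMap hS),
      ← Measure.map_prod_map _ _ measurable_id hS, Measure.map_id, sum_law p fun i => -θ i,
      conv_gaussian]
  -- I₀ : the integral of ρ over the Gaussian part
  set I₀ : ℝ := ∫ yx, ρ ((yx.1 - α - ∑ i, θ i * yx.2 i) / σ) ∂μ₀ with hI₀def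
  have hI₀eq : I₀ = ∫ w, ρ ((w - α) / σ) ∂(gaussianReal 0 V) := by
    rw [← hlaw0]
    have hL0 : Measurable fun yx : ℝ × (Fin p → ℝ) => yx.1 + ∑ i, (-θ i) * yx.2 i :=
      measurable_fst.add (hS.comp measurable_snd)
    have hf' : AEStronglyMeasurable (fun w : ℝ => ρ ((w - α) / σ))
        (μ₀.map (fun yx : ℝ × (Fin p → ℝ) => yx.1 + ∑ i, (-θ i) * yx.2 i)) :=
      (hρ_meas.comp ((measurable_id.sub measurable_const).div_const σ)).aestronglyMeasurable
    rw [integral_map hL0.aemeasurable hf', hI₀def]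
    apply integral_congr_ae
    refine Filter.Eventually.of_forall fun yx => ?_
    show ρ ((yx.1 - α - ∑ i, θ i * yx.2 i) / σ) = ρ ((yx.1 + ∑ i, -θ i * yx.2 i - α) / σ)
    congr 1
    simp only [neg_mul, Finset.sum_neg_distrib]
    ring
  -- Anderson + scaling : g (σ / T) ≤ I₀
  have hgood : g (σ / T) ≤ I₀ := by
    have hand := anderson (fun u => ρ (u / σ))
      (hρ_meas.comp (measurable_id.div_const σ))
      (fun u => by simp only [neg_div]; exact hρ_even _)
      (fun x hx y hy hxy => hρ_mono
        (mem_Ici.mpr (div_nonneg (mem_Ici.mp hx) hσpos.le))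
        (mem_Ici.mpr (div_nonneg (mem_Ici.mp hy) hσpos.le))
        (div_le_div_of_nonneg_right hxy hσpos.le))
      (fun u => (hρ_bdd _).1) (fun u => (hρ_bdd _).2) V hVne α
    have hscale : ∫ u, ρ (u / σ) ∂(gaussianReal 0 V) = g (σ / T) := by
      rw [rho_scale hρ_meas V hVne σ, hg (σ / T) (div_pos hσpos hTpos)]
      apply integral_congr_ae
      refine Filter.Eventually.of_forall fun z => ?_
      show ρ (Real.sqrt V * z / σ) = ρ (z / (σ / T))
      congr 1
      rw [hsqrtV, div_div_eq_mul_div]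
      ring
    rw [hI₀eq]
    rw [← hscale]
    simpa using hand
  -- g basic facts
  have hgle1 : ∀ s, 0 < s → g s ≤ 1 := by
    intro s hs
    rw [hg s hs]
    exact rho_int_le_one hρ_bdd hρ_meas _ (measurable_id.div_const s)
  have hgnn : ∀ s, 0 < s → 0 ≤ g s := by
    intro s hs
    rw [hg s hs]
    exact rho_int_nonneg hρ_bdd _ _
  have hganti : ∀ s₁ s₂ : ℝ, 0 < s₁ → s₁ ≤ s₂ → g s₂ ≤ g s₁ := by
    intro s₁ s₂ h1 h12
    rw [hg s₁ h1, hg s₂ (lt_of_lt_of_le h1 h12)]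
    exact rho_gauss_antitone hρ_meas hρ_even hρ_mono hρ_bdd h1 h12
  -- from feasibility : g (σ/T) ≤ b / (1-ε)
  have hIstar_nn : 0 ≤ ∫ yx, ρ ((yx.1 - α - ∑ i, θ i * yx.2 i) / σ) ∂Hstar :=
    rho_int_nonneg hρ_bdd _ _
  have hfeas' : (1 - ε) * I₀ ≤ b := by
    rw [hsplit α θ σ] at hfeas
    have h4 : 0 ≤ ε * ∫ yx, ρ ((yx.1 - α - ∑ i, θ i * yx.2 i) / σ) ∂Hstar :=
      mul_nonneg hε.le hIstar_nn
    linarith only [hfeas, h4]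
  have hgT : g (σ / T) ≤ b / (1 - ε) := by
    rw [le_div_iff₀ h1ε]
    calc g (σ / T) * (1 - ε) = (1 - ε) * g (σ / T) := by ring
      _ ≤ (1 - ε) * I₀ := mul_le_mul_of_nonneg_left hgood h1ε.le
      _ ≤ b := hfeas'
  -- b/(1-ε) < 1
  have hb1 : b / (1 - ε) < 1 := by
    rcases lt_trichotomy (b / (1 - ε)) 1 with h | h | h
    · exact h
    · exfalso
      have hgγ1 : ∫ z, ρ (z / γbε) ∂(gaussianReal 0 1) = 1 := by
        rw [← hg γbε hγ_pos, hγ, h]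
      have := g_one_propagate hρ_meas hρ_bdd hγ_pos hσ_pos hgγ1
      rw [← hg σbε hσ_pos, hσ] at this
      have : (b:ℝ) - ε = 1 - ε := by
        field_simp at this
        linarith
      linarith
    · exfalso
      have := hgle1 γbε hγ_pos
      rw [hγ] at this
      linarith
  -- σ / T ≥ γbε
  have hγT : γbε ≤ σ / T := by
    by_contra hlt
    push_neg at hlt
    have hσT : 0 < σ / T := div_pos hσpos hTpos
    have h1 : g γbε ≤ g (σ / T) := hganti _ _ hσT hlt.le
    have heq : g (σ / T) = g γbε := le_antisymm (by rw [hγ]; exact hgT) h1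
    have := strict_core hρ_meas hρ_even hρ_mono hρ_bdd hρ_lim hσT hlt (by
      rw [← hg (σ / T) hσT, ← hg γbε hγ_pos]; exact heq)
    rw [← hg γbε hγ_pos, hγ] at this
    linarith
  -- bddBelow of A-images
  have hAlb : ∀ t : ℝ, 0 < t → BddBelow (A '' Ici t) := by
    intro t ht
    refine ⟨Real.log t, ?_⟩
    rintro y ⟨s, hs, rfl⟩
    have hst : 0 < s := lt_of_lt_of_le ht (mem_Ici.mp hs)
    rw [hA s]
    have h1 := hgnn s hst
    have h2 : Real.log t ≤ Real.log s := Real.log_le_log ht (mem_Ici.mp hs)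
    have h3 : 0 ≤ c * (1 - ε) * g s := mul_nonneg (mul_nonneg hc.le h1ε.le) h1
    linarith only [h2, h3]
  -- lower bound : sInf (A '' Ici γbε) + log T ≤ L
  set Lact : ℝ := c * (∫ yx, ρ ((yx.1 - α - ∑ i, θ i * yx.2 i) / σ) ∂H) + Real.log σ
    with hLact
  have hlow : sInf (A '' Ici γbε) + Real.log T ≤ Lact := by
    have hAle : A (σ / T) + Real.log T ≤ Lact := by
      rw [hA, hLact, hsplit α θ σ]
      have hlog : Real.log σ = Real.log (σ / T) + Real.log T := by
        rw [← Real.log_mul (by positivity) (ne_of_gt hTpos), div_mul_cancel₀ _ (ne_of_gt hTpos)]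
      rw [hlog]
      have t1 : c * (1 - ε) * g (σ / T) ≤ c * (1 - ε) * I₀ :=
        mul_le_mul_of_nonneg_left hgood (mul_nonneg hc.le h1ε.le)
      have t2 : 0 ≤ c * (ε * ∫ yx, ρ ((yx.1 - α - ∑ i, θ i * yx.2 i) / σ) ∂Hstar) :=
        mul_nonneg hc.le (mul_nonneg hε.le hIstar_nn)
      have t3 : c * ((1 - ε) * I₀ + ε *
          ∫ yx, ρ ((yx.1 - α - ∑ i, θ i * yx.2 i) / σ) ∂Hstar)
          = c * (1 - ε) * I₀ + c * (ε *
          ∫ yx, ρ ((yx.1 - α - ∑ i, θ i * yx.2 i) / σ) ∂Hstar) := by ring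
      linarith only [t1, t2, t3]
    refine le_trans ?_ hAle
    have hmem : A (σ / T) ∈ A '' Ici γbε := mem_image_of_mem A (mem_Ici.mpr hγT)
    have := csInf_le (hAlb γbε hγ_pos) hmem
    linarith
  -- upper bound : Lact ≤ sInf (A '' Ici σbε) + c * ε
  have hup : Lact ≤ sInf (A '' Ici σbε) + c * ε := by
    have hball : ∀ s, s ∈ Ici σbε → Lact - c * ε ≤ A s := by
      intro s hs
      have hspos : 0 < s := lt_of_lt_of_le hσ_pos (mem_Ici.mp hs)
      have hzero_int : ∫ yx, ρ ((yx.1 - 0 - ∑ i, (0 : Fin p → ℝ) i * yx.2 i) / s) ∂μ₀ = g s := by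
        have hpt : ∀ yx : ℝ × (Fin p → ℝ),
            ((yx.1 - 0 - ∑ i, (0 : Fin p → ℝ) i * yx.2 i) / s) = yx.1 / s := by
          intro yx; simp
        rw [show (fun yx : ℝ × (Fin p → ℝ) => ρ ((yx.1 - 0 - ∑ i, (0 : Fin p → ℝ) i * yx.2 i) / s))
          = fun yx => ρ (yx.1 / s) from funext fun yx => by rw [hpt]]
        rw [hμ₀, integral_prod _ (integrable_rho hρ_meas hρ_bdd _
          ((measurable_fst.div_const s)))]
        simp only [integral_const, measure_univ, ENNReal.toReal_one, probReal_univ, one_smul]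
        rw [hg s hspos]
      have hHstar_le : ∫ yx, ρ ((yx.1 - 0 - ∑ i, (0 : Fin p → ℝ) i * yx.2 i) / s) ∂Hstar ≤ 1 :=
        rho_int_le_one hρ_bdd hρ_meas _ (hfmeas 0 0 s)
      have hHstar_nn : 0 ≤ ∫ yx, ρ ((yx.1 - 0 - ∑ i, (0 : Fin p → ℝ) i * yx.2 i) / s) ∂Hstar :=
        rho_int_nonneg hρ_bdd _ _
      have hgs : g s ≤ g σbε := hganti _ _ hσ_pos (mem_Ici.mp hs)
      have hfeas_s : ∫ yx, ρ ((yx.1 - 0 - ∑ i, (0 : Fin p → ℝ) i * yx.2 i) / s) ∂H ≤ b := by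
        rw [hsplit 0 0 s, hzero_int]
        calc (1 - ε) * g s + ε * ∫ yx, ρ ((yx.1 - 0 - ∑ i, (0 : Fin p → ℝ) i * yx.2 i) / s) ∂Hstar
            ≤ (1 - ε) * g σbε + ε * 1 :=
            add_le_add (mul_le_mul_of_nonneg_left hgs h1ε.le)
              (mul_le_mul_of_nonneg_left hHstar_le hε.le)
          _ = b := by rw [hσ]; field_simp; ring
      have hm := hmin 0 0 s hspos hfeas_s
      rw [hsplit 0 0 s, hzero_int] at hm
      rw [hA]
      have hin : (1 - ε) * g s + ε * (∫ yx, ρ ((yx.1 - 0 - ∑ i, (0 : Fin p → ℝ) i * yx.2 i) / s) ∂Hstar)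
          ≤ (1 - ε) * g s + ε := by
        have := mul_le_mul_of_nonneg_left hHstar_le hε.le
        linarith only [this]
      have hc1 : c * ((1 - ε) * g s + ε * ∫ yx, ρ ((yx.1 - 0 - ∑ i, (0 : Fin p → ℝ) i * yx.2 i) / s) ∂Hstar)
          ≤ c * ((1 - ε) * g s + ε) := mul_le_mul_of_nonneg_left hin hc.le
      have he2 : c * ((1 - ε) * g s + ε) = c * (1 - ε) * g s + c * ε := by ring
      rw [hLact]
      linarith
    have hne : (A '' Ici σbε).Nonempty := ⟨A σbε, mem_image_of_mem A (mem_Ici.mpr le_rfl)⟩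
    have := le_csInf hne fun y hy => by
      obtain ⟨s, hs, rfl⟩ := hy
      exact hball s hs
    linarith
  -- conclude : log T ≤ c ε + D
  have hlogT : Real.log T ≤ c * ε + D := by
    rw [hD]
    linarith
  have hTle : T ≤ Real.exp (c * ε + D) := by
    calc T = Real.exp (Real.log T) := (Real.exp_log hTpos).symm
      _ ≤ Real.exp (c * ε + D) := Real.exp_le_exp.mpr hlogT
  have hT2 : 1 + ∑ i, θ i ^ 2 ≤ Real.exp (2 * c * ε + 2 * D) := by
    have h1 : T ^ 2 ≤ Real.exp (c * ε + D) ^ 2 := by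
      apply pow_le_pow_left₀ hTpos.le hTle
    rw [hT, Real.sq_sqrt (by linarith)] at h1
    rw [show (2 * c * ε + 2 * D) = (c * ε + D) + (c * ε + D) by ring, Real.exp_add, ← sq]
    exact h1
  apply Real.sqrt_le_sqrt
  linarith
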